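/- arXiv:1308.5508 — 4 statements merged into one kernel-verified Lean document; each statement's English description precedes it below -/
import Mathlib

section
/- Let n > q ≥ 1 be coprime integers, let n/q = [b_1, …, b_l] and n/(n−q) = [a_1, …, a_k] be the Hirzebruch–Jung continued fraction expansions, let q' be the inverse of q modulo n (with 1 ≤ q' ≤ n−1), and note that n−q' is the inverse of n−q modulo n. Then γ(q/n) = −γ((n−q)/n); explicitly, (q+q')/n + Σ_{i=1}^l (b_i − 3) + ((n−q)+(n−q'))/n + Σ_{j=1}^k (a_j − 3) = 0. -/
/-- Evaluation of a Hirzebruch–Jung continued fraction `[b₁, …, b_l]`,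
i.e. `b₁ - 1/(b₂ - 1/(⋯ - 1/b_l))`, as a rational number. -/
def hjEval : List ℤ → ℚ
  | [] => 0
  | b :: l => (b : ℚ) - 1 / hjEval l

private def Ssum (l : List ℤ) : ℚ := (l.map (fun x => (x : ℚ) - 3)).sum

private lemma Ssum_cons (x : ℤ) (l : List ℤ) : Ssum (x :: l) = ((x:ℚ) - 3) + Ssum l := by
  simp [Ssum]

private lemma hj_gt_one : ∀ l : List ℤ, (∀ x ∈ l, 2 ≤ x) → l ≠ [] → 1 < hjEval l := by
  intro l
  induction l with
  | nil => intro _ h; exact absurd rfl h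
  | cons c t ih =>
    intro h _
    have hc : (2:ℚ) ≤ (c:ℚ) := by exact_mod_cast h c List.mem_cons_self
    show (1:ℚ) < hjEval (c :: t)
    simp only [hjEval]
    rcases eq_or_ne t [] with rfl | ht
    · simp [hjEval]; linarith
    · have h1 := ih (fun x hx => h x (List.mem_cons_of_mem _ hx)) ht
      have hpos : 0 < hjEval t := lt_trans one_pos h1
      have h2 : 1 / hjEval t < 1 := by rw [div_lt_one hpos]; exact h1
      have h3 : 0 < 1 / hjEval t := by positivity
      linarith

private lemma reduce (n q : ℤ) (hq : 1 ≤ q) (h2 : 2*q < n)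
    (b a : List ℤ) (hb2 : ∀ x ∈ b, 2 ≤ x) (ha2 : ∀ x ∈ a, 2 ≤ x)
    (hbe : hjEval b = (n:ℚ)/(q:ℚ)) (hae : hjEval a = (n:ℚ)/((n:ℚ)-(q:ℚ))) :
    ∃ b' a' : List ℤ, (∀ x ∈ b', 2 ≤ x) ∧ (∀ x ∈ a', 2 ≤ x) ∧
      hjEval b' = ((n-q : ℤ):ℚ)/(q:ℚ) ∧
      hjEval a' = ((n-q : ℤ):ℚ)/(((n-q:ℤ):ℚ)-(q:ℚ)) ∧
      Ssum b' + Ssum a' = Ssum b + Ssum a := by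
  have hq0 : (0:ℚ) < (q:ℚ) := by exact_mod_cast hq
  have hnq : (0:ℚ) < (n:ℚ) - (q:ℚ) := by
    have : q < n := by omega
    have : (q:ℚ) < (n:ℚ) := by exact_mod_cast this
    linarith
  have h2q : (2:ℚ)*(q:ℚ) < (n:ℚ) := by exact_mod_cast h2
  have hr : (2:ℚ) < (n:ℚ)/(q:ℚ) := by rw [lt_div_iff₀ hq0]; linarith
  have hs1 : (1:ℚ) < (n:ℚ)/((n:ℚ)-(q:ℚ)) := by rw [lt_div_iff₀ hnq]; linarith
  have hs2 : (n:ℚ)/((n:ℚ)-(q:ℚ)) < 2 := by rw [div_lt_iff₀ hnq]; linarith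
  -- analyze b
  cases b with
  | nil => simp [hjEval] at hbe; rw [← hbe] at hr; norm_num at hr
  | cons b1 t =>
    simp only [hjEval] at hbe
    have hinvt : 0 ≤ 1 / hjEval t ∧ 1 / hjEval t < 1 := by
      rcases eq_or_ne t [] with rfl | ht
      · simp [hjEval]
      · have h1 := hj_gt_one t (fun x hx => hb2 x (List.mem_cons_of_mem _ hx)) ht
        have hpos : 0 < hjEval t := lt_trans one_pos h1
        constructor
        · positivity
        · rw [div_lt_one hpos]; exact h1
    have hb1 : (2:ℚ) < (b1:ℚ) := by linarith [hinvt.1, hinvt.2]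
    have hb1' : (3:ℤ) ≤ b1 := by
      have : (2:ℤ) < b1 := by exact_mod_cast hb1
      omega
    -- analyze a
    cases a with
    | nil => simp [hjEval] at hae; rw [← hae] at hs1; norm_num at hs1
    | cons a1 u =>
      simp only [hjEval] at hae
      have ha1ge : (2:ℚ) ≤ (a1:ℚ) := by exact_mod_cast ha2 a1 List.mem_cons_self
      have hu : u ≠ [] := by
        rintro rfl
        simp [hjEval] at hae
        rw [hae] at ha1ge; linarith
      have h1u := hj_gt_one u (fun x hx => ha2 x (List.mem_cons_of_mem _ hx)) hu
      have hposu : 0 < hjEval u := lt_trans one_pos h1u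
      have hiu1 : 1 / hjEval u < 1 := by rw [div_lt_one hposu]; exact h1u
      have hiu0 : 0 < 1 / hjEval u := by positivity
      have ha1lt : (a1:ℚ) < 3 := by linarith
      have ha1 : a1 = 2 := by
        have h3 : a1 < 3 := by exact_mod_cast ha1lt
        have h2' : (2:ℤ) ≤ a1 := ha2 a1 List.mem_cons_self
        omega
      subst ha1
      -- compute hjEval u
      have hn2q : ((n:ℚ) - 2*(q:ℚ)) ≠ 0 := by linarith
      have hnq' : ((n:ℚ) - (q:ℚ)) ≠ 0 := ne_of_gt hnq
      have hueval : hjEval u = ((n-q:ℤ):ℚ)/(((n-q:ℤ):ℚ)-(q:ℚ)) := by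
        have hinv : 1 / hjEval u = ((n:ℚ) - 2*(q:ℚ))/((n:ℚ)-(q:ℚ)) := by
          rw [eq_div_iff hnq']
          have := hae
          field_simp at this ⊢
          push_cast at this ⊢
          linarith
        push_cast
        rw [eq_div_iff (by push_cast; linarith : ((n:ℚ)-(q:ℚ))-(q:ℚ) ≠ 0)]
        have hne : hjEval u ≠ 0 := ne_of_gt hposu
        field_simp at hinv
        linarith [hinv]
      refine ⟨(b1-1) :: t, u, ?_, fun x hx => ha2 x (List.mem_cons_of_mem _ hx), ?_, hueval, ?_⟩
      · intro x hx
        rcases List.mem_cons.mp hx with rfl | hx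
        · omega
        · exact hb2 x (List.mem_cons_of_mem _ hx)
      · show ((b1-1:ℤ):ℚ) - 1 / hjEval t = ((n-q : ℤ):ℚ)/(q:ℚ)
        have hd : ((n-q : ℤ):ℚ)/(q:ℚ) = (n:ℚ)/(q:ℚ) - 1 := by push_cast; field_simp
        rw [hd]; push_cast; linarith [hbe]
      · rw [Ssum_cons, Ssum_cons, Ssum_cons]
        push_cast
        ring

private lemma eval_two (l : List ℤ) (h2 : ∀ x ∈ l, 2 ≤ x) (he : hjEval l = 2) :
    Ssum l = -1 := by
  cases l with
  | nil => simp [hjEval] at he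
  | cons c t =>
    simp only [hjEval] at he
    rcases eq_or_ne t [] with rfl | ht
    · simp [hjEval] at he
      have hc : c = 2 := by exact_mod_cast he
      subst hc
      simp [Ssum]
      norm_num
    · have h1 := hj_gt_one t (fun x hx => h2 x (List.mem_cons_of_mem _ hx)) ht
      have hpos : 0 < hjEval t := lt_trans one_pos h1
      have hlt : 1 / hjEval t < 1 := by rw [div_lt_one hpos]; exact h1
      have hgt : 0 < 1 / hjEval t := by positivity
      have hc3 : (c:ℚ) < 3 := by linarith
      have hc2 : (2:ℚ) < (c:ℚ) := by linarith
      have h3 : c < 3 := by exact_mod_cast hc3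
      have h2' : 2 < c := by exact_mod_cast hc2
      omega

private lemma key : ∀ N : ℕ, ∀ n q : ℤ, n ≤ (N:ℤ) → 1 ≤ q → q < n →
    ∀ b a : List ℤ, (∀ x ∈ b, 2 ≤ x) → (∀ x ∈ a, 2 ≤ x) →
    hjEval b = (n:ℚ)/(q:ℚ) → hjEval a = (n:ℚ)/((n:ℚ)-(q:ℚ)) →
    Ssum b + Ssum a = -2 := by
  intro N
  induction N with
  | zero => intro n q hN hq hqn; omega
  | succ N ih =>
    intro n q hN hq hqn b a hb2 ha2 hbe hae
    rcases lt_trichotomy (2*q) n with h | h | h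
    · obtain ⟨b', a', hb2', ha2', hbe', hae', hS⟩ := reduce n q hq h b a hb2 ha2 hbe hae
      have := ih (n-q) q (by push_cast at hN ⊢; omega) hq (by omega) b' a' hb2' ha2' hbe' hae'
      linarith
    · -- n = 2q : both evaluate to 2
      have hq0 : ((q:ℚ)) ≠ 0 := by
        have : (0:ℚ) < (q:ℚ) := by exact_mod_cast hq
        linarith
      have hn : (n:ℚ) = 2*(q:ℚ) := by exact_mod_cast h.symm
      have hbe2 : hjEval b = 2 := by rw [hbe, hn]; field_simp
      have hae2 : hjEval a = 2 := by
        rw [hae, hn]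
        have : 2*(q:ℚ) - (q:ℚ) = (q:ℚ) := by ring
        rw [this]
        field_simp
      have h1 := eval_two b hb2 hbe2
      have h2 := eval_two a ha2 hae2
      linarith
    · -- 2q > n : swap roles
      have h1 : 1 ≤ n - q := by omega
      have h2' : 2*(n-q) < n := by omega
      have hae' : hjEval a = (n:ℚ)/(((n-q:ℤ)):ℚ) := by rw [hae]; push_cast; ring_nf
      have hbe' : hjEval b = (n:ℚ)/((n:ℚ)-((n-q:ℤ):ℚ)) := by
        rw [hbe]; push_cast; ring_nf
      obtain ⟨b', a', hb2', ha2', hbe'', hae'', hS⟩ :=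
        reduce n (n-q) h1 h2' a b ha2 hb2 hae' hbe'
      have hnn : n - (n - q) = q := by ring
      rw [hnn] at hbe'' hae''
      have := ih q (n-q) (by push_cast at hN ⊢; omega) h1 (by omega) b' a' hb2' ha2' hbe'' hae''
      linarith


/-- Let `n > q ≥ 1` be coprime, `n/q = [b₁, …, b_l]` and `n/(n-q) = [a₁, …, a_k]` the
Hirzebruch–Jung continued fraction expansions, and `q'` the inverse of `q` mod `n` with
`1 ≤ q' ≤ n-1`.  Then `γ(q/n) = -γ((n-q)/n)`; explicitly,
`(q+q')/n + Σ (bᵢ - 3) + ((n-q)+(n-q'))/n + Σ (aⱼ - 3) = 0`. -/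
theorem gamma_antisymmetric (n q q' : ℤ) (hq1 : 1 ≤ q) (hqn : q < n)
    (hcop : IsCoprime q n)
    (hq'1 : 1 ≤ q') (hq'n : q' ≤ n - 1) (hq'inv : n ∣ q * q' - 1)
    (b a : List ℤ) (hb2 : ∀ x ∈ b, 2 ≤ x) (ha2 : ∀ x ∈ a, 2 ≤ x)
    (hbeval : hjEval b = (n : ℚ) / (q : ℚ))
    (haeval : hjEval a = (n : ℚ) / ((n : ℚ) - (q : ℚ))) :
    (1 / 6 : ℚ) * (((q : ℚ) + (q' : ℚ)) / (n : ℚ) + (b.map (fun x => (x : ℚ) - 3)).sum)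
      = -((1 / 6 : ℚ) * ((((n : ℚ) - (q : ℚ)) + ((n : ℚ) - (q' : ℚ))) / (n : ℚ)
          + (a.map (fun x => (x : ℚ) - 3)).sum))
    ∧ ((q : ℚ) + (q' : ℚ)) / (n : ℚ) + (b.map (fun x => (x : ℚ) - 3)).sum
        + (((n : ℚ) - (q : ℚ)) + ((n : ℚ) - (q' : ℚ))) / (n : ℚ)
        + (a.map (fun x => (x : ℚ) - 3)).sum = 0 := by
  have hkey := key n.toNat n q (by omega) hq1 hqn b a hb2 ha2 hbeval haeval
  have hSb : Ssum b = (b.map (fun x => (x : ℚ) - 3)).sum := rfl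
  have hSa : Ssum a = (a.map (fun x => (x : ℚ) - 3)).sum := rfl
  rw [hSb, hSa] at hkey
  have hn0 : (n:ℚ) ≠ 0 := by
    have : (0:ℚ) < (n:ℚ) := by exact_mod_cast (by omega : (0:ℤ) < n)
    linarith
  have hdiv : ((q : ℚ) + (q' : ℚ)) / (n : ℚ)
      + (((n : ℚ) - (q : ℚ)) + ((n : ℚ) - (q' : ℚ))) / (n : ℚ) = 2 := by
    field_simp
    ring
  constructor
  · linarith
  · linarith
end

section
/- Let n > q ≥ 1 be coprime integers and let n/q = [b_1, …, b_l] and n/(n−q) = [a_1, …, a_k] be the Hirzebruch–Jung continued fraction expansions. Then Σ_{i=1}^k (a_i − 1) = Σ_{i=1}^l (b_i − 1) = k + l − 1. -/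
lemma hjEval_nil : hjEval [] = 0 := rfl
lemma hjEval_cons (x : ℤ) (t : List ℤ) : hjEval (x :: t) = (x:ℚ) - 1 / hjEval t := rfl

lemma hjEval_gt_one : ∀ (l : List ℤ), l ≠ [] → (∀ x ∈ l, 2 ≤ x) → 1 < hjEval l := by
  intro l
  induction l with
  | nil => intro h; exact absurd rfl h
  | cons x t ih =>
    intro _ h2
    have hx : (2:ℚ) ≤ (x:ℚ) := by exact_mod_cast h2 x (List.mem_cons_self)
    rcases eq_or_ne t [] with rfl | ht
    · rw [hjEval_cons, hjEval_nil]; simp; linarith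
    · have h1 := ih ht (fun y hy => h2 y (List.mem_cons_of_mem _ hy))
      have h0 : 0 < hjEval t := lt_trans one_pos h1
      have hlt : 1 / hjEval t < 1 := by rw [div_lt_one h0]; exact h1
      rw [hjEval_cons]; linarith

lemma hjEval_le_head (x : ℤ) (t : List ℤ) (h2 : ∀ y ∈ x :: t, 2 ≤ y) :
    hjEval (x :: t) ≤ (x:ℚ) := by
  rcases eq_or_ne t [] with rfl | ht
  · rw [hjEval_cons, hjEval_nil]; simp
  · have h1 := hjEval_gt_one t ht (fun y hy => h2 y (List.mem_cons_of_mem _ hy))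
    have : 0 < 1 / hjEval t := by positivity
    rw [hjEval_cons]; linarith

lemma hjEval_lt_head (x : ℤ) (t : List ℤ) (ht : t ≠ []) (h2 : ∀ y ∈ x :: t, 2 ≤ y) :
    hjEval (x :: t) < (x:ℚ) := by
  have h1 := hjEval_gt_one t ht (fun y hy => h2 y (List.mem_cons_of_mem _ hy))
  have : 0 < 1 / hjEval t := by positivity
  rw [hjEval_cons]; linarith

lemma head_sub_one_lt (x : ℤ) (t : List ℤ) (h2 : ∀ y ∈ x :: t, 2 ≤ y) :
    (x:ℚ) - 1 < hjEval (x :: t) := by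
  rcases eq_or_ne t [] with rfl | ht
  · rw [hjEval_cons, hjEval_nil]; simp
  · have h1 := hjEval_gt_one t ht (fun y hy => h2 y (List.mem_cons_of_mem _ hy))
    have h0 : 0 < hjEval t := lt_trans one_pos h1
    have hlt : 1 / hjEval t < 1 := by rw [div_lt_one h0]; exact h1
    rw [hjEval_cons]; linarith

lemma hjEval_tail (x : ℤ) (t : List ℤ) (ht : t ≠ []) (h2 : ∀ y ∈ x :: t, 2 ≤ y) :
    hjEval t = 1 / ((x:ℚ) - hjEval (x :: t)) := by
  have h1 := hjEval_gt_one t ht (fun y hy => h2 y (List.mem_cons_of_mem _ hy))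
  have h0 : hjEval t ≠ 0 := by positivity
  rw [hjEval_cons]
  field_simp
  ring

lemma hj_twos : ∀ (a : List ℤ) (m : ℤ), 2 ≤ m → (∀ x ∈ a, 2 ≤ x) →
    hjEval a = (m:ℚ)/((m:ℚ)-1) →
    ((a.map (fun x => x - 1)).sum = m - 1 ∧ (a.length : ℤ) = m - 1) := by
  intro a
  induction a with
  | nil =>
    intro m hm _ he
    exfalso
    have hm' : (2:ℚ) ≤ (m:ℚ) := by exact_mod_cast hm
    have : (0:ℚ) < (m:ℚ)/((m:ℚ)-1) := div_pos (by linarith) (by linarith)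
    rw [hjEval_nil] at he; linarith [he ▸ this]
  | cons x t ih =>
    intro m hm h2 he
    have hm' : (2:ℚ) ≤ (m:ℚ) := by exact_mod_cast hm
    have hm1 : (0:ℚ) < (m:ℚ) - 1 := by linarith
    have hle2 : (m:ℚ)/((m:ℚ)-1) ≤ 2 := by
      rw [div_le_iff₀ hm1]; linarith
    have hgt1 : 1 < (m:ℚ)/((m:ℚ)-1) := by
      rw [lt_div_iff₀ hm1]; linarith
    have hx2 : 2 ≤ x := h2 x (List.mem_cons_self)
    have hx : x = 2 := by
      have h3 := head_sub_one_lt x t h2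
      rw [he] at h3
      have : (x:ℚ) - 1 < 2 := lt_of_lt_of_le h3 hle2
      have : (x:ℚ) < 3 := by linarith
      have : x < 3 := by exact_mod_cast this
      omega
    subst hx
    rcases eq_or_ne t [] with rfl | ht
    · have : (2:ℚ) = (m:ℚ)/((m:ℚ)-1) := by
        rw [← he, hjEval_cons, hjEval_nil]; simp
      have hm2 : (m:ℚ) = 2 := by
        field_simp at this; linarith
      have : m = 2 := by exact_mod_cast hm2
      subst this
      simp
    · -- tail nonempty: eval < 2 so m > 2
      have hlt := hjEval_lt_head 2 t ht h2
      rw [he] at hlt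
      have hm3 : (2:ℚ) < (m:ℚ) := by
        rw [div_lt_iff₀ hm1] at hlt; push_cast at hlt ⊢; linarith
      have hm3' : 3 ≤ m := by
        have h4 : (2:ℤ) < m := by exact_mod_cast hm3
        omega
      have htev : hjEval t = ((m:ℚ)-1)/(((m:ℚ)-1)-1) := by
        have := hjEval_tail 2 t ht h2
        rw [he] at this
        rw [this]
        have hne : (m:ℚ) - 2 ≠ 0 := by linarith
        field_simp
        ring
      have ihm := ih (m-1) (by omega) (fun y hy => h2 y (List.mem_cons_of_mem _ hy))
        (by rw [htev]; push_cast; ring_nf)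
      obtain ⟨hs, hl⟩ := ihm
      constructor
      · simp only [List.map_cons, List.sum_cons, hs]; ring
      · simp only [List.length_cons]; push_cast; omega

lemma hj_step (n q : ℤ) (hq1 : 1 ≤ q) (hqn : q < n) (h2q : 2*q ≤ n) (hcop : IsCoprime q n)
    (b a : List ℤ) (hb2 : ∀ x ∈ b, 2 ≤ x) (ha2 : ∀ x ∈ a, 2 ≤ x)
    (hbeval : hjEval b = (n:ℚ)/(q:ℚ)) (haeval : hjEval a = (n:ℚ)/((n:ℚ)-(q:ℚ)))
    (IH : ∀ n' q' : ℤ, n' ≤ n - 1 → 1 ≤ q' → q' < n' → IsCoprime q' n' →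
      ∀ b' a' : List ℤ, (∀ x ∈ b', 2 ≤ x) → (∀ x ∈ a', 2 ≤ x) →
      hjEval b' = (n':ℚ)/(q':ℚ) → hjEval a' = (n':ℚ)/((n':ℚ)-(q':ℚ)) →
      (((a'.map (fun x => x-1)).sum = (a'.length:ℤ) + b'.length - 1) ∧
       ((b'.map (fun x => x-1)).sum = (a'.length:ℤ) + b'.length - 1))) :
    (((a.map (fun x => x-1)).sum = (a.length:ℤ) + b.length - 1) ∧
     ((b.map (fun x => x-1)).sum = (a.length:ℤ) + b.length - 1)) := by
  have hn2 : 2 ≤ n := by omega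
  have hnQ : (0:ℚ) < (n:ℚ) := by exact_mod_cast (by omega : (0:ℤ) < n)
  have hqQ : (0:ℚ) < (q:ℚ) := by exact_mod_cast (by omega : (0:ℤ) < q)
  have hqnQ : (q:ℚ) < (n:ℚ) := by exact_mod_cast hqn
  have hnqQ : (0:ℚ) < (n:ℚ) - (q:ℚ) := by linarith
  rcases eq_or_lt_of_le hq1 with hq | hq2
  · -- q = 1
    subst hq
    rw [Int.cast_one, div_one] at hbeval
    have htw := hj_twos a n hn2 ha2 (by rw [haeval, Int.cast_one])
    obtain ⟨hsa, hla⟩ := htw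
    have hbne : b ≠ [] := by
      intro h
      rw [h, hjEval_nil] at hbeval
      have : (2:ℚ) ≤ (n:ℚ) := by exact_mod_cast hn2
      linarith
    obtain ⟨x, t, rfl⟩ : ∃ x t, b = x :: t := by
      cases b with
      | nil => exact absurd rfl hbne
      | cons x t => exact ⟨x, t, rfl⟩
    have ht : t = [] := by
      by_contra ht
      have h1 := hjEval_lt_head x t ht hb2
      have h2 := head_sub_one_lt x t hb2
      rw [hbeval] at h1 h2
      have hxn1 : n < x := by exact_mod_cast h1
      have hxn2 : x - 1 < n := by
        have : (x:ℚ) - 1 < (n:ℚ) := h2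
        exact_mod_cast this
      omega
    subst ht
    have hx : (x:ℚ) = (n:ℚ) := by
      rw [hjEval_cons, hjEval_nil] at hbeval
      simpa using hbeval
    have hxn : x = n := by exact_mod_cast hx
    subst hxn
    constructor
    · simp only [List.length_cons, List.length_nil]
      push_cast
      linarith
    · simp only [List.map_cons, List.map_nil, List.sum_cons, List.sum_nil,
        List.length_cons, List.length_nil]
      push_cast
      linarith
  · -- 2 ≤ q
    have hq2' : 2 ≤ q := hq2
    have h2qlt : 2*q < n := by
      rcases eq_or_lt_of_le h2q with h | h
      · exfalso
        have hdvd : q ∣ n := ⟨2, by omega⟩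
        have hu := IsCoprime.isUnit_of_dvd' hcop dvd_rfl hdvd
        rw [Int.isUnit_iff] at hu
        omega
      · exact h
    have h2qQ : (2*q:ℚ) < (n:ℚ) := by exact_mod_cast h2qlt
    -- b analysis
    have hevb : (2:ℚ) < hjEval b := by
      rw [hbeval, lt_div_iff₀ hqQ]; linarith
    have hbne : b ≠ [] := by
      intro h; rw [h, hjEval_nil] at hevb; linarith
    obtain ⟨b1, tb, rfl⟩ : ∃ b1 tb, b = b1 :: tb := by
      cases b with
      | nil => exact absurd rfl hbne
      | cons x t => exact ⟨x, t, rfl⟩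
    have hb1 : 3 ≤ b1 := by
      have h1 := hjEval_le_head b1 tb hb2
      have h2 : (2:ℚ) < (b1:ℚ) := lt_of_lt_of_le hevb h1
      have : (2:ℤ) < b1 := by exact_mod_cast h2
      omega
    -- a analysis
    have heva1 : 1 < hjEval a := by
      rw [haeval, lt_div_iff₀ hnqQ]; linarith
    have heva2 : hjEval a < 2 := by
      rw [haeval, div_lt_iff₀ hnqQ]; linarith
    have hane : a ≠ [] := by
      intro h; rw [h, hjEval_nil] at heva1; linarith
    obtain ⟨a1, ta, rfl⟩ : ∃ a1 ta, a = a1 :: ta := by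
      cases a with
      | nil => exact absurd rfl hane
      | cons x t => exact ⟨x, t, rfl⟩
    have ha1 : a1 = 2 := by
      have hlow := head_sub_one_lt a1 ta ha2
      have h3 : (a1:ℚ) - 1 < 2 := lt_trans hlow heva2
      have h4 : (a1:ℚ) < 3 := by linarith
      have h5 : a1 < 3 := by exact_mod_cast h4
      have := ha2 a1 (List.mem_cons_self)
      omega
    subst ha1
    have htane : ta ≠ [] := by
      intro h
      subst h
      rw [hjEval_cons, hjEval_nil] at heva2
      norm_num at heva2
    -- new evaluations
    have hn2qQ : (0:ℚ) < (n:ℚ) - 2*(q:ℚ) := by linarith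
    have hta : hjEval ta = ((n:ℚ)-(q:ℚ))/(((n:ℚ)-(q:ℚ))-(q:ℚ)) := by
      have h := hjEval_tail 2 ta htane ha2
      rw [haeval] at h
      have hkey : ((2:ℤ):ℚ) - (n:ℚ)/((n:ℚ)-(q:ℚ)) = ((n:ℚ)-2*(q:ℚ))/((n:ℚ)-(q:ℚ)) := by
        push_cast
        field_simp
        ring
      rw [h, hkey, one_div_div]
      rw [div_eq_div_iff (by linarith) (by linarith)]
      ring
    have htb : hjEval ((b1-1) :: tb) = ((n:ℚ)-(q:ℚ))/(q:ℚ) := by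
      rw [hjEval_cons] at hbeval ⊢
      push_cast
      have hkey : ((n:ℚ)-(q:ℚ))/(q:ℚ) = (n:ℚ)/(q:ℚ) - 1 := by
        field_simp
      rw [hkey]
      linarith
    have hb2' : ∀ x ∈ (b1-1) :: tb, 2 ≤ x := by
      intro x hx
      rcases List.mem_cons.mp hx with h | h
      · omega
      · exact hb2 x (List.mem_cons_of_mem _ h)
    have ha2' : ∀ x ∈ ta, 2 ≤ x := fun x hx => ha2 x (List.mem_cons_of_mem _ hx)
    have hcop' : IsCoprime q (n - q) := by
      have h := hcop.add_mul_left_right (-1)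
      have heq : n + q * (-1) = n - q := by ring
      rwa [heq] at h
    obtain ⟨hsa, hsb⟩ := IH (n - q) q (by omega) hq1 (by omega) hcop'
      ((b1-1) :: tb) ta hb2' ha2'
      (by rw [htb]; push_cast; ring_nf)
      (by rw [hta]; push_cast; ring_nf)
    simp only [List.map_cons, List.sum_cons, List.length_cons] at hsa hsb ⊢
    push_cast at hsa hsb ⊢
    constructor
    · linarith
    · linarith

lemma hj_aux : ∀ (N : ℕ) (n q : ℤ), n ≤ (N:ℤ) → 1 ≤ q → q < n → IsCoprime q n →
    ∀ b a : List ℤ, (∀ x ∈ b, 2 ≤ x) → (∀ x ∈ a, 2 ≤ x) →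
    hjEval b = (n:ℚ)/(q:ℚ) → hjEval a = (n:ℚ)/((n:ℚ)-(q:ℚ)) →
    (((a.map (fun x => x-1)).sum = (a.length:ℤ) + b.length - 1) ∧
     ((b.map (fun x => x-1)).sum = (a.length:ℤ) + b.length - 1)) := by
  intro N
  induction N with
  | zero =>
    intro n q hN hq1 hqn _
    exfalso
    simp only [Nat.cast_zero] at hN
    omega
  | succ N ih =>
    intro n q hN hq1 hqn hcop b a hb2 ha2 hbe hae
    have hN' : n ≤ (N:ℤ) + 1 := by push_cast at hN; linarith
    have hIH : ∀ n' q' : ℤ, n' ≤ n - 1 → 1 ≤ q' → q' < n' → IsCoprime q' n' →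
        ∀ b' a' : List ℤ, (∀ x ∈ b', 2 ≤ x) → (∀ x ∈ a', 2 ≤ x) →
        hjEval b' = (n':ℚ)/(q':ℚ) → hjEval a' = (n':ℚ)/((n':ℚ)-(q':ℚ)) →
        (((a'.map (fun x => x-1)).sum = (a'.length:ℤ) + b'.length - 1) ∧
         ((b'.map (fun x => x-1)).sum = (a'.length:ℤ) + b'.length - 1)) := by
      intro n' q' hle
      exact ih n' q' (by omega)
    rcases le_or_gt (2*q) n with h | h
    · exact hj_step n q hq1 hqn h hcop b a hb2 ha2 hbe hae hIH
    · have hcop2 : IsCoprime (n - q) n := by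
        have h1 : IsCoprime n (-q) := hcop.symm.neg_right
        have h2 := h1.add_mul_left_right 1
        have heq : -q + n * 1 = n - q := by ring
        rw [heq] at h2
        exact h2.symm
      obtain ⟨h1, h2⟩ := hj_step n (n - q) (by omega) (by omega) (by omega) hcop2 a b
        ha2 hb2
        (by rw [hae]; push_cast; ring_nf)
        (by rw [hbe]; push_cast; ring_nf)
        hIH
      exact ⟨h2.trans (by ring), h1.trans (by ring)⟩

/-- (Riemenschneider) Let `n > q ≥ 1` be coprime, with Hirzebruch–Jung continued fraction
expansions `n/q = [b₁, …, b_l]` and `n/(n-q) = [a₁, …, a_k]`.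
Then `Σ (aᵢ - 1) = Σ (bᵢ - 1) = k + l - 1`. -/
theorem riemenschneider (n q : ℤ) (hq1 : 1 ≤ q) (hqn : q < n) (hcop : IsCoprime q n)
    (b a : List ℤ) (hb2 : ∀ x ∈ b, 2 ≤ x) (ha2 : ∀ x ∈ a, 2 ≤ x)
    (hbeval : hjEval b = (n : ℚ) / (q : ℚ))
    (haeval : hjEval a = (n : ℚ) / ((n : ℚ) - (q : ℚ))) :
    (a.map (fun x => x - 1)).sum = (b.map (fun x => x - 1)).sum
    ∧ (b.map (fun x => x - 1)).sum = (a.length : ℤ) + (b.length : ℤ) - 1 := by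
  obtain ⟨h1, h2⟩ := hj_aux n.toNat n q (Int.self_le_toNat n) hq1 hqn hcop b a hb2 ha2
    hbeval haeval
  exact ⟨h1.trans h2.symm, h2⟩
end

section
/- Let (0; m_1, …, m_r) be a signature with g = 0, r ≤ 3 and Θ := Θ(0; m_1, …, m_r) > 0, and let ξ ≥ 1/2 be a rational number such that m_i ≤ 2(ξ/Θ + 3) for every i. Then r = 3 and for every i, m_i ≤ 6(ξ + 1 + √(ξ(ξ+2))), and in particular m_i < 12(ξ + 1). -/
lemma key_aux (a b x : ℤ) (ha : 2 ≤ a) (hb : 2 ≤ b) (hx : 2 ≤ x)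
    (Θ ξ : ℚ) (hΘ : Θ = 1 - 1/(a:ℚ) - 1/(b:ℚ) - 1/(x:ℚ)) (hΘpos : 0 < Θ)
    (hξ : 1/2 ≤ ξ) (hw : (x:ℚ) ≤ 2*(ξ/Θ + 3)) :
    (x : ℝ) ≤ 6 * ((ξ : ℝ) + 1 + Real.sqrt ((ξ : ℝ) * ((ξ : ℝ) + 2)))
        ∧ (x : ℚ) < 12 * (ξ + 1) := by
  have haq : (2:ℚ) ≤ (a:ℚ) := by exact_mod_cast ha
  have hbq : (2:ℚ) ≤ (b:ℚ) := by exact_mod_cast hb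
  have hxq : (2:ℚ) ≤ (x:ℚ) := by exact_mod_cast hx
  have hxpos : (0:ℚ) < (x:ℚ) := by linarith
  have hapos : (0:ℚ) < (a:ℚ) := by linarith
  have hbpos : (0:ℚ) < (b:ℚ) := by linarith
  -- not both a = b = 2
  have hab : 1/(a:ℚ) + 1/(b:ℚ) ≤ 5/6 := by
    by_cases ha2 : a = 2
    · have hb3 : 3 ≤ b := by
        by_contra h
        have hb2 : b = 2 := by omega
        subst ha2 hb2
        have : (0:ℚ) < 1/(x:ℚ) := by positivity
        rw [hΘ] at hΘpos; norm_num at hΘpos; linarith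
      have hb3q : (3:ℚ) ≤ (b:ℚ) := by exact_mod_cast hb3
      have : 1/(b:ℚ) ≤ 1/3 := by
        apply one_div_le_one_div_of_le <;> linarith
      subst ha2; push_cast; linarith
    · have ha3 : 3 ≤ a := by omega
      have ha3q : (3:ℚ) ≤ (a:ℚ) := by exact_mod_cast ha3
      have h1 : 1/(a:ℚ) ≤ 1/3 := by
        apply one_div_le_one_div_of_le <;> linarith
      have h2 : 1/(b:ℚ) ≤ 1/2 := by
        apply one_div_le_one_div_of_le <;> linarith
      linarith
  -- Θ + 1/x ≥ 1/6
  have hΘx : 1/6 - 1/(x:ℚ) ≤ Θ := by rw [hΘ]; linarith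
  -- from hwiman: x * Θ ≤ 2ξ + 6Θ
  have h1 : (x:ℚ) * Θ ≤ 2*ξ + 6*Θ := by
    have h := mul_le_mul_of_nonneg_right hw hΘpos.le
    have hc : ξ/Θ * Θ = ξ := div_mul_cancel₀ _ hΘpos.ne'
    rw [show 2*(ξ/Θ+3)*Θ = 2*(ξ/Θ*Θ)+6*Θ from by ring, hc] at h
    linarith
  have hxinv : (0:ℚ) < 1/(x:ℚ) := by positivity
  -- quadratic bound when x > 6
  have hquad : (x:ℚ) ≤ 6 ∨ (x:ℚ)^2 - 12*(ξ+1)*(x:ℚ) + 36 ≤ 0 := by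
    by_cases h6 : (x:ℚ) ≤ 6
    · left; exact h6
    · right
      push_neg at h6
      have h2 : (1/6 - 1/(x:ℚ)) * ((x:ℚ) - 6) ≤ 2*ξ := by
        nlinarith [mul_le_mul_of_nonneg_right hΘx (by linarith : (0:ℚ) ≤ (x:ℚ) - 6)]
      have h3 : (1/(x:ℚ)) * (x:ℚ) = 1 := by field_simp
      nlinarith [mul_le_mul_of_nonneg_right h2 hxpos.le]
  have hξ1 : (1:ℚ)/2 ≤ ξ := hξ
  constructor
  · -- real bound
    set s : ℝ := Real.sqrt ((ξ:ℝ) * ((ξ:ℝ) + 2)) with hs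
    have hsnn : 0 ≤ s := Real.sqrt_nonneg _
    have hξr : (1:ℝ)/2 ≤ (ξ:ℝ) := by have := (Rat.cast_le (K:=ℝ)).mpr hξ; push_cast at this; linarith
    have hssq : s^2 = (ξ:ℝ) * ((ξ:ℝ) + 2) := by
      rw [hs, Real.sq_sqrt]; nlinarith
    rcases hquad with h | h
    · have : (x:ℝ) ≤ 6 := by exact_mod_cast h
      nlinarith
    · have hr : ((x:ℚ):ℝ)^2 - 12*((ξ:ℝ)+1)*((x:ℚ):ℝ) + 36 ≤ 0 := by
        exact_mod_cast h
      have hc : ((x:ℚ):ℝ) = (x:ℝ) := by push_cast; ring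
      rw [hc] at hr
      nlinarith [sq_nonneg ((x:ℝ) - 6*((ξ:ℝ)+1) - 6*s), sq_nonneg ((x:ℝ) - 6*((ξ:ℝ)+1) + 6*s)]
  · rcases hquad with h | h
    · linarith
    · nlinarith

/-- Let `(0; m₁, …, m_r)` be a signature with `g = 0`, `r ≤ 3` and
`Θ := 2g - 2 + Σ (1 - 1/mᵢ) > 0`, and let `ξ ≥ 1/2` be rational with
`mᵢ ≤ 2(ξ/Θ + 3)` for every `i`.  Then `r = 3` and for every `i`,
`mᵢ ≤ 6(ξ + 1 + √(ξ(ξ+2)))`, and in particular `mᵢ < 12(ξ + 1)`. -/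
theorem bound_mi_genus_zero (g : ℕ) (hg : g = 0) (m : List ℤ)
    (hm : ∀ x ∈ m, 2 ≤ x) (hr : m.length ≤ 3)
    (Θ : ℚ) (hΘdef : Θ = 2 * (g : ℚ) - 2 + (m.map (fun x => 1 - 1 / (x : ℚ))).sum)
    (hΘpos : 0 < Θ)
    (ξ : ℚ) (hξ : 1 / 2 ≤ ξ)
    (hwiman : ∀ x ∈ m, (x : ℚ) ≤ 2 * (ξ / Θ + 3)) :
    m.length = 3
    ∧ ∀ x ∈ m,
        (x : ℝ) ≤ 6 * ((ξ : ℝ) + 1 + Real.sqrt ((ξ : ℝ) * ((ξ : ℝ) + 2)))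
        ∧ (x : ℚ) < 12 * (ξ + 1) := by
  subst hg
  have hpos : ∀ x ∈ m, (0:ℚ) < ((x:ℚ))⁻¹ := by
    intro x hx
    have : (2:ℚ) ≤ (x:ℚ) := by exact_mod_cast hm x hx
    positivity
  match m, hr with
  | [], _ =>
    simp at hΘdef; linarith
  | [a], _ =>
    have ha := hpos a (by simp)
    simp at hΘdef; linarith
  | [a, b], _ =>
    have ha := hpos a (by simp)
    have hb := hpos b (by simp)
    simp at hΘdef; linarith
  | [a, b, c], _ =>
    have ha := hm a (by simp)
    have hb := hm b (by simp)
    have hc := hm c (by simp)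
    simp at hΘdef
    refine ⟨rfl, ?_⟩
    intro x hx
    simp only [List.mem_cons, List.not_mem_nil, or_false] at hx
    rcases hx with rfl | rfl | rfl
    · exact key_aux b c x hb hc ha Θ ξ (by rw [hΘdef]; ring) hΘpos hξ
        (hwiman x (by simp))
    · exact key_aux a c x ha hc hb Θ ξ (by rw [hΘdef]; ring) hΘpos hξ
        (hwiman x (by simp))
    · exact key_aux a b x ha hb hc Θ ξ (by rw [hΘdef]; ring) hΘpos hξ
        (hwiman x (by simp))
end

section
/- Let (g; m_1, …, m_r) be a signature with r ≥ 1 and Θ := Θ(g; m_1, …, m_r) > 0, set f := max(1/6, (r−3)/2), and let I, ξ be positive rational numbers such that I·ξ/(Θ·m_i) is a positive integer for every i. Then for every i, m_i ≤ (1 + I·ξ)/f. -/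
lemma sig_norm (m : List ℤ) :
    (m.map (fun x => 1 - 1 / (x : ℚ))) = m.map (fun x : ℤ => 1 - 1 / (x : ℚ)) := by
  induction m with
  | nil => rfl
  | cons a l ih => simp_all [List.flatMap_cons]

lemma sig_sum_lb (l : List ℤ) (h : ∀ y ∈ l, 2 ≤ y) :
    (l.length : ℚ) / 2 ≤ (l.map (fun x : ℤ => 1 - 1 / (x : ℚ))).sum := by
  induction l with
  | nil => simp
  | cons a l ih =>
    simp only [List.map_cons, List.sum_cons, List.length_cons]
    have ha : (2:ℚ) ≤ (a:ℚ) := by exact_mod_cast h a (by simp)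
    have h1 : 1/(a:ℚ) ≤ 1/2 := by
      apply one_div_le_one_div_of_le <;> linarith
    have := ih (fun y hy => h y (List.mem_cons_of_mem _ hy))
    push_cast
    linarith

lemma sig_sum_ub (l : List ℤ) (h : ∀ y ∈ l, 2 ≤ y) :
    (l.map (fun x : ℤ => 1 - 1 / (x : ℚ))).sum ≤ (l.length : ℚ) := by
  induction l with
  | nil => simp
  | cons a l ih =>
    simp only [List.map_cons, List.sum_cons, List.length_cons]
    have ha : (2:ℚ) ≤ (a:ℚ) := by exact_mod_cast h a (by simp)
    have h1 : 0 < 1/(a:ℚ) := by positivity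
    have := ih (fun y hy => h y (List.mem_cons_of_mem _ hy))
    push_cast
    linarith

lemma two_inv_bound (b c : ℤ) (hb : 2 ≤ b) (hc : 2 ≤ c)
    (h : 1/(b:ℚ) + 1/(c:ℚ) < 1) : 1/(b:ℚ) + 1/(c:ℚ) ≤ 5/6 := by
  have hb' : b = 2 ∨ 3 ≤ b := by omega
  have hc' : c = 2 ∨ 3 ≤ c := by omega
  have hbQ : (2:ℚ) ≤ (b:ℚ) := by exact_mod_cast hb
  have hcQ : (2:ℚ) ≤ (c:ℚ) := by exact_mod_cast hc
  rcases hb' with rfl | hb3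
  · rcases hc' with rfl | hc3
    · push_cast at h; norm_num at h
    · have h3 : (3:ℚ) ≤ (c:ℚ) := by exact_mod_cast hc3
      have h1 : 1/(c:ℚ) ≤ 1/3 := by
        apply one_div_le_one_div_of_le <;> linarith
      push_cast
      linarith
  · have h1 : 1/(b:ℚ) ≤ 1/3 := by
      have : (3:ℚ) ≤ (b:ℚ) := by exact_mod_cast hb3
      apply one_div_le_one_div_of_le <;> linarith
    have h2 : 1/(c:ℚ) ≤ 1/2 := by
      apply one_div_le_one_div_of_le <;> linarith
    linarith

set_option maxHeartbeats 1000000 in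
/-- Let `(g; m₁, …, m_r)` be a signature with `r ≥ 1` and
`Θ := 2g - 2 + Σ (1 - 1/mᵢ) > 0`, set `f := max(1/6, (r-3)/2)`, and let `I, ξ` be
positive rationals such that `I·ξ/(Θ·mᵢ)` is a positive integer for every `i`.
Then for every `i`, `mᵢ ≤ (1 + I·ξ)/f`. -/
theorem bound_mi_via_index (g : ℕ) (m : List ℤ) (hr : m ≠ [])
    (hm : ∀ x ∈ m, 2 ≤ x)
    (Θ : ℚ) (hΘdef : Θ = 2 * (g : ℚ) - 2 + (m.map (fun x => 1 - 1 / (x : ℚ))).sum)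
    (hΘpos : 0 < Θ)
    (I ξ : ℚ) (hI : 0 < I) (hξ : 0 < ξ)
    (hdiv : ∀ x ∈ m, ∃ k : ℕ, 0 < k ∧ I * ξ / (Θ * (x : ℚ)) = (k : ℚ)) :
    ∀ x ∈ m, (x : ℚ) ≤ (1 + I * ξ) / max (1 / 6 : ℚ) (((m.length : ℚ) - 3) / 2) := by
  rw [sig_norm] at hΘdef
  intro x hx
  set f : ℚ := max (1 / 6 : ℚ) (((m.length : ℚ) - 3) / 2) with hf
  have hf0 : 0 < f := lt_of_lt_of_le (by norm_num) (le_max_left _ _)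
  have hx2 : (2:ℚ) ≤ (x:ℚ) := by exact_mod_cast hm x hx
  have hx0 : (0:ℚ) < (x:ℚ) := by linarith
  have hxinv : 0 < 1/(x:ℚ) := by positivity
  obtain ⟨s, t, hst⟩ := List.append_of_mem hx
  have hmem : ∀ y ∈ s ++ t, y ∈ m := by
    intro y hy
    rw [hst]
    rcases List.mem_append.1 hy with h | h
    · exact List.mem_append.2 (Or.inl h)
    · exact List.mem_append.2 (Or.inr (List.mem_cons_of_mem _ h))
  have hs2 : ∀ y ∈ s, 2 ≤ y := fun y hy => hm y (hmem y (List.mem_append.2 (Or.inl hy)))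
  have ht2 : ∀ y ∈ t, 2 ≤ y := fun y hy => hm y (hmem y (List.mem_append.2 (Or.inr hy)))
  set A : ℚ := (s.map (fun x : ℤ => 1 - 1 / (x : ℚ))).sum with hA
  set B : ℚ := (t.map (fun x : ℤ => 1 - 1 / (x : ℚ))).sum with hB
  have hS : (m.map (fun x : ℤ => 1 - 1 / (x : ℚ))).sum = A + (1 - 1/(x:ℚ)) + B := by
    rw [hst]
    rw [List.map_append, List.sum_append, List.map_cons, List.sum_cons]
    rw [hA, hB]; ring
  have hlen : (m.length : ℚ) = (s.length : ℚ) + 1 + (t.length : ℚ) := by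
    rw [hst]; push_cast [List.length_append, List.length_cons]; ring
  have hAlb := sig_sum_lb s hs2
  have hBlb := sig_sum_lb t ht2
  have hAub := sig_sum_ub s hs2
  have hBub := sig_sum_ub t ht2
  rw [← hA] at hAlb hAub
  rw [← hB] at hBlb hBub
  -- key inequality: f ≤ Θ + 1/x
  have key : f ≤ Θ + 1/(x:ℚ) := by
    rw [hf]
    apply max_le
    · -- 1/6 ≤ Θ + 1/x
      by_cases hg : g = 0
      · subst hg
        have hΘ' : Θ = -2 + (A + (1 - 1/(x:ℚ)) + B) := by
          rw [hΘdef, hS]; norm_num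
        -- number of other points is at least 2
        have hst2 : 2 ≤ s.length + t.length := by
          have h1 : (1:ℚ) < (s.length : ℚ) + (t.length : ℚ) := by
            rw [hΘ'] at hΘpos; linarith
          have : (1:ℚ) < ((s.length + t.length : ℕ) : ℚ) := by push_cast; linarith
          exact_mod_cast this
        rcases eq_or_lt_of_le hst2 with heq | hlt
        · -- exactly two other points: s ++ t = [b, c]
          have hlen2 : (s ++ t).length = 2 := by
            rw [List.length_append]; omega
          obtain ⟨b, c, hbc⟩ := List.length_eq_two.mp hlen2
          have hAB : A + B = (1 - 1/(b:ℚ)) + (1 - 1/(c:ℚ)) := by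
            have h2 : ((s ++ t).map (fun x : ℤ => 1 - 1 / (x : ℚ))).sum
                = (1 - 1/(b:ℚ)) + (1 - 1/(c:ℚ)) := by rw [hbc]; simp
            rw [List.map_append, List.sum_append, ← hA, ← hB] at h2
            exact h2
          have hb2 : 2 ≤ b := hm b (hmem b (by simp [hbc]))
          have hc2 : 2 ≤ c := hm c (hmem c (by simp [hbc]))
          have hlt1 : 1/(b:ℚ) + 1/(c:ℚ) < 1 := by
            rw [hΘ'] at hΘpos
            nlinarith [hxinv, hAB]
          have h56 := two_inv_bound b c hb2 hc2 hlt1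
          rw [hΘ']
          nlinarith [hAB]
        · -- at least three other points
          have h3 : (3:ℚ) ≤ (s.length : ℚ) + (t.length : ℚ) := by
            have h4 : (3:ℕ) ≤ s.length + t.length := by omega
            have : ((3:ℕ):ℚ) ≤ ((s.length + t.length : ℕ) : ℚ) := by exact_mod_cast h4
            push_cast at this; linarith
          rw [hΘ']
          linarith
      · have hg1 : (1:ℚ) ≤ (g:ℚ) := by
          have : 1 ≤ g := Nat.one_le_iff_ne_zero.mpr hg
          exact_mod_cast this
        rw [hΘdef, hS]
        have hs0 : (0:ℚ) ≤ (s.length : ℚ) := by positivity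
        have ht0 : (0:ℚ) ≤ (t.length : ℚ) := by positivity
        linarith
    · -- (r-3)/2 ≤ Θ + 1/x
      rw [hΘdef, hS, hlen]
      have hg0 : (0:ℚ) ≤ (g:ℚ) := by positivity
      linarith
  -- From divisibility: Θ * x ≤ I * ξ
  obtain ⟨k, hk0, hkeq⟩ := hdiv x hx
  have hΘx : 0 < Θ * (x:ℚ) := by positivity
  have hIξ : Θ * (x:ℚ) ≤ I * ξ := by
    have hIx : I * ξ = (k:ℚ) * (Θ * (x:ℚ)) := by
      field_simp at hkeq
      linarith [hkeq]
    have hk1 : (1:ℚ) ≤ (k:ℚ) := by exact_mod_cast hk0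
    nlinarith
  -- conclude
  rw [le_div_iff₀ hf0]
  have h1 : (x:ℚ) * f ≤ (x:ℚ) * (Θ + 1/(x:ℚ)) :=
    mul_le_mul_of_nonneg_left key (le_of_lt hx0)
  have h2 : (x:ℚ) * (1/(x:ℚ)) = 1 := mul_one_div_cancel (ne_of_gt hx0)
  nlinarith
end
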